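/- Let S ⊆ reg(R) be a multiplicatively closed subset and N a submodule of an R-module M with S ∩ Z_N(M) = ∅, where Z_N(M) = {r ∈ R : rm ∈ N for some m ∈ M \ N}. If S⁻¹N is a semi n-submodule of S⁻¹M, then N is a semi n-submodule of M. -/

import Mathlib

def IsSemiNSubmodule (R M : Type*) [CommRing R] [AddCommGroup M] [Module R M]
    (N : Submodule R M) : Prop :=
  N ≠ ⊤ ∧ ∀ (r : R) (m : M), r ^ 2 • m ∈ N → ¬ IsNilpotent r →
    (∀ s : R, s • m = 0 → s = 0) → r • m ∈ N

theorem semiN_of_localized_semiN (R M : Type*) [CommRing R] [AddCommGroup M] [Module R M]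
    (S : Submonoid R) (hS : (S : Set R) ⊆ (nonZeroDivisors R : Set R))
    (N : Submodule R M)
    (hZ : ∀ s ∈ S, ∀ m : M, m ∉ N → s • m ∉ N)
    (h : IsSemiNSubmodule (Localization S) (LocalizedModule S M) (N.localized S)) :
    IsSemiNSubmodule R M N := by
  obtain ⟨hne, hmain⟩ := h
  constructor
  · rintro rfl
    exact hne (Submodule.localized'_top _ _ _)
  · intro r m hrm hnil hfaith
    have key : (algebraMap R (Localization S) r) • (LocalizedModule.mk m 1)
        ∈ N.localized S := by
      apply hmain
      · -- r'^2 • mk m 1 ∈ localized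
        have e1 : (algebraMap R (Localization S) r) ^ 2 •
            (LocalizedModule.mk m 1 : LocalizedModule S M)
            = LocalizedModule.mk (r ^ 2 • m) 1 := by
          rw [← map_pow, algebraMap_smul]
          exact LocalizedModule.smul'_mk _ _ _
        rw [e1]
        exact ⟨r ^ 2 • m, hrm, 1, (IsLocalizedModule.mk_eq_mk' 1 (r ^ 2 • m)).symm⟩
      · -- not nilpotent
        rintro ⟨n, hn⟩
        apply hnil
        rw [← map_pow, IsLocalization.map_eq_zero_iff S] at hn
        obtain ⟨s, hs⟩ := hn
        have hsnzd : (s : R) ∈ nonZeroDivisors R := hS s.2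
        exact ⟨n, (mem_nonZeroDivisors_iff.mp hsnzd).2 (r ^ n) (by rwa [mul_comm] at hs)⟩
      · -- faithful
        intro x
        induction x using Localization.ind with
        | _ p =>
        obtain ⟨a, t⟩ := p
        intro hx
        rw [LocalizedModule.mk_smul_mk] at hx
        have h0 : (0 : LocalizedModule S M) = LocalizedModule.mk (0 : M) (t * 1) :=
          (LocalizedModule.zero_mk _).symm
        rw [h0, LocalizedModule.mk_eq] at hx
        obtain ⟨u, hu⟩ := hx
        simp only [smul_zero, Submonoid.smul_def, smul_smul] at hu
        have h3 := hfaith _ hu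
        rw [← mul_assoc] at h3
        have hmem : ((u : R) * ((t * 1 : S) : R)) ∈ nonZeroDivisors R :=
          hS (mul_mem u.2 (t * 1).2)
        have ha : a = 0 :=
          (mem_nonZeroDivisors_iff.mp hmem).2 a (by rwa [mul_comm] at h3)
        rw [ha, Localization.mk_zero]
    -- extract conclusion
    have e2 : (algebraMap R (Localization S) r) •
        (LocalizedModule.mk m 1 : LocalizedModule S M)
        = LocalizedModule.mk (r • m) 1 := by
      rw [algebraMap_smul]; exact LocalizedModule.smul'_mk _ _ _
    rw [e2] at key
    obtain ⟨n, hn, s, hmk⟩ := key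
    rw [← IsLocalizedModule.mk_eq_mk', LocalizedModule.mk_eq] at hmk
    obtain ⟨u, hu⟩ := hmk
    -- hu : u • 1 • n = u • s • (r • m) or similar orientation
    have hmem2 : ((u : R) * (s : R)) • (r • m) ∈ N := by
      have : ((u : R) * (s : R)) • (r • m) = (u : R) • (n : M) := by
        simp only [Submonoid.smul_def, one_smul, smul_smul, ← mul_assoc] at hu ⊢
        exact hu.symm
      rw [this]
      exact N.smul_mem _ hn
    by_contra hcon
    exact hZ _ (mul_mem u.2 s.2) _ hcon hmem2
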